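/- arXiv:math/0003170 — 2 statements merged into one kernel-verified Lean document; each statement's English description precedes it below -/
import Mathlib

section
/- For all integers b, q ≥ 0, the alternating sum ∑_{p=0}^{b} (-1)^p · C(p+q, p) · C(b+q+1, p+q+1) equals 1, where C(n,k) denotes the binomial coefficient. -/
lemma magic_aux (q n p : ℕ) (h : p ≤ n) :
    (p + q).choose p * (n + q).choose (p + q) = (n + q).choose q * n.choose p := by
  rw [Nat.choose_symm_add, mul_comm,
    Nat.choose_mul (n := n + q) (Nat.le_add_left q p)]
  simp

/-- "Magic Lemma 8.13": for all integers `b, q ≥ 0`,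
`∑_{p=0}^{b} (-1)^p · C(p+q, p) · C(b+q+1, p+q+1) = 1`. -/
theorem magic_lemma_8_13 (b q : ℕ) :
    ∑ p ∈ Finset.range (b + 1),
      (-1 : ℤ) ^ p * ((p + q).choose p : ℤ) * ((b + q + 1).choose (p + q + 1) : ℤ) = 1 := by
  induction b with
  | zero => simp
  | succ b ih =>
    have hsplit : ∀ p ∈ Finset.range (b + 1 + 1),
        (-1 : ℤ) ^ p * ((p + q).choose p : ℤ) * ((b + 1 + q + 1).choose (p + q + 1) : ℤ)
        = (-1 : ℤ) ^ p * ((p + q).choose p : ℤ) * ((b + q + 1).choose (p + q) : ℤ)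
          + (-1 : ℤ) ^ p * ((p + q).choose p : ℤ) * ((b + q + 1).choose (p + q + 1) : ℤ) := by
      intro p _
      have : (b + 1 + q + 1).choose (p + q + 1)
          = (b + q + 1).choose (p + q) + (b + q + 1).choose (p + q + 1) := by
        have := Nat.choose_succ_succ (b + q + 1) (p + q)
        convert this using 2 <;> omega
      rw [this]
      push_cast
      ring
    rw [Finset.sum_congr rfl hsplit, Finset.sum_add_distrib]
    have hB : ∑ p ∈ Finset.range (b + 1 + 1),
        (-1 : ℤ) ^ p * ((p + q).choose p : ℤ) * ((b + q + 1).choose (p + q + 1) : ℤ) = 1 := by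
      rw [Finset.sum_range_succ, Nat.choose_eq_zero_of_lt (show b + q + 1 < b + 1 + q + 1 by omega)]
      simpa using ih
    have hA : ∑ p ∈ Finset.range (b + 1 + 1),
        (-1 : ℤ) ^ p * ((p + q).choose p : ℤ) * ((b + q + 1).choose (p + q) : ℤ) = 0 := by
      have : ∀ p ∈ Finset.range (b + 1 + 1),
          (-1 : ℤ) ^ p * ((p + q).choose p : ℤ) * ((b + q + 1).choose (p + q) : ℤ)
          = ((b + q + 1).choose q : ℤ) * ((-1 : ℤ) ^ p * ((b + 1).choose p : ℤ)) := by
        intro p hp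
        have hp' : p ≤ b + 1 := by simpa using Nat.lt_succ_iff.mp (Finset.mem_range.mp hp)
        have h1 := magic_aux q (b + 1) p hp'
        have h2 : b + 1 + q = b + q + 1 := by omega
        rw [h2] at h1
        have : ((p + q).choose p : ℤ) * ((b + q + 1).choose (p + q) : ℤ)
            = ((b + q + 1).choose q : ℤ) * ((b + 1).choose p : ℤ) := by exact_mod_cast h1
        rw [mul_assoc, this]; ring
      rw [Finset.sum_congr rfl this, ← Finset.mul_sum,
        Int.alternating_sum_range_choose_of_ne (Nat.succ_ne_zero b), mul_zero]
    rw [hA, hB]; ring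
end

section
/- In any ℤ≥0-graded conformal algebra C, the bracket [x,y] := ∑_{j≥0} (-1)^j ∂^{(j+1)}(x_{(j)} y) satisfies the Jacobi identity [x,[y,z]] = [[x,y],z] + [y,[x,z]], so (C, [,]) is a Lie algebra over k. -/
/-- A `ℤ≥0`-graded conformal algebra over a commutative ring `k` (section 0.4 of the
paper): a graded `k`-module `M` with divided-power operators `∂^{(j)}` of degree `j`
and bilinear operations `x_{(n)}y` of degree `-n-1` for `n ≥ 0`, satisfying the axioms
(0.4.1)–(0.4.4).  Infinite sums are expressed with `finsum` (`∑ᶠ`); they are locally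
finite since the operations have negative degree. -/
structure GradedConformalAlgebra (k : Type*) (M : Type*) [CommRing k]
    [AddCommGroup M] [Module k M] where
  /-- the grading `M = ⊕_{i ≥ 0} M_i` -/
  grading : ℕ → Submodule k M
  isInternal : DirectSum.IsInternal grading
  /-- the divided powers `∂^{(j)}` -/
  D : ℕ → M →ₗ[k] M
  /-- the operations `x_{(n)} y`, `n ≥ 0` -/
  nop : ℕ → M →ₗ[k] M →ₗ[k] M
  D_zero : D 0 = LinearMap.id
  /-- (0.4.1): `∂^{(i)} ∂^{(j)} = C(i+j,i) ∂^{(i+j)}` -/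
  D_comp : ∀ i j : ℕ, (D i).comp (D j) = (((i + j).choose i : ℤ)) • D (i + j)
  /-- `∂^{(j)}` has degree `j` -/
  D_deg : ∀ (i j : ℕ) (x : M), x ∈ grading i → D j x ∈ grading (i + j)
  /-- `_{(n)}` has degree `-n-1` -/
  nop_deg : ∀ (i j n : ℕ) (x y : M), x ∈ grading i → y ∈ grading j →
    nop n x y ∈ grading (i + j - n - 1) ∧ (i + j < n + 1 → nop n x y = 0)
  /-- (0.4.2): `(∂^{(i)}x)_{(n)}y = (-1)^i C(n,i) x_{(n-i)}y` (the right-hand side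
  being zero when `i > n`, since then `C(n,i) = 0`). -/
  D_nop : ∀ (i n : ℕ) (x y : M),
    nop n (D i x) y = ((-1 : ℤ) ^ i * (n.choose i : ℤ)) • nop (n - i) x y
  /-- (0.4.3): quasi-symmetry `x_{(n)}y = (-1)^{n+1} ∑_{j≥0} (-1)^j ∂^{(j)}(y_{(n+j)}x)` -/
  quasi_symm : ∀ (n : ℕ) (x y : M),
    nop n x y = (-1 : ℤ) ^ (n + 1) • ∑ᶠ j : ℕ, ((-1 : ℤ) ^ j) • D j (nop (n + j) y x)
  /-- (0.4.4): `x_{(m)}y_{(n)}z = y_{(n)}x_{(m)}z + ∑_{j=0}^m C(m,j)(x_{(j)}y)_{(m+n-j)}z` -/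
  comm_formula : ∀ (m n : ℕ) (x y z : M),
    nop m x (nop n y z) = nop n y (nop m x z)
      + ∑ j ∈ Finset.range (m + 1), ((m.choose j : ℤ)) • nop (m + n - j) (nop j x y) z

/-- The bracket `[x,y] := ∑_{j≥0} (-1)^j ∂^{(j+1)}(x_{(j)} y)` of (8.21.1). -/
noncomputable def GradedConformalAlgebra.bracket {k M : Type*} [CommRing k] [AddCommGroup M]
    [Module k M] (C : GradedConformalAlgebra k M) (x y : M) : M :=
  ∑ᶠ j : ℕ, ((-1 : ℤ) ^ j) • C.D (j + 1) (C.nop j x y)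


open Finset

private lemma neg_one_pow_sub (c j : ℕ) (h : j ≤ c) : (-1:ℤ)^(c-j) = (-1)^c * (-1)^j := by
  have h1 : (-1:ℤ)^(c-j) * (-1)^j = (-1)^c := by rw [← pow_add]; congr 1; omega
  have h2 : (-1:ℤ)^j * (-1)^j = 1 := by rw [← pow_add]; exact Even.neg_one_pow ⟨j, rfl⟩
  calc (-1:ℤ)^(c-j) = (-1)^(c-j) * ((-1)^j * (-1)^j) := by rw [h2, mul_one]
    _ = ((-1)^(c-j) * (-1)^j) * (-1)^j := by ring
    _ = (-1)^c * (-1)^j := by rw [h1]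

private lemma alt_partial (m : ℕ) (hm : 1 ≤ m) : ∀ c : ℕ,
    ∑ i ∈ Finset.range (c+1), (-1:ℤ)^i * (m.choose i) = (-1)^c * ((m-1).choose c) := by
  obtain ⟨m', rfl⟩ : ∃ m', m = m' + 1 := ⟨m - 1, by omega⟩
  intro c
  induction c with
  | zero => simp
  | succ c ih =>
    rw [Finset.sum_range_succ, ih]
    have h : (m' + 1).choose (c + 1) = m'.choose c + m'.choose (c+1) := Nat.choose_succ_succ _ _
    simp only [Nat.add_sub_cancel] at *
    rw [h]
    push_cast
    ring

private lemma choose_split (a p : ℕ) :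
    (((a+1+p).choose p : ℤ)) = ((a+p).choose p : ℤ) + (if p = 0 then 0 else ((a+p).choose (p-1) : ℤ)) := by
  cases p with
  | zero => simp
  | succ q =>
    have h := Nat.choose_succ_succ (a+q+1) q
    have e1 : a+1+(q+1) = a+q+1+1 := by omega
    have e2 : a+(q+1) = a+q+1 := by omega
    rw [e1, e2, h]
    simp only [Nat.succ_ne_zero, if_false, Nat.add_sub_cancel]
    push_cast; ring

private lemma identF : ∀ a : ℕ, ∀ c m : ℕ, a + 1 ≤ m →
    ∑ p ∈ Finset.range (c+1), (-1:ℤ)^p * ((a+p).choose p) * (m.choose (c-p))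
      = ((m-a-1).choose c : ℤ) := by
  intro a
  induction a with
  | zero =>
    intro c m hm
    simp only [Nat.zero_add, Nat.choose_self, Nat.cast_one, mul_one]
    have key : ∑ p ∈ Finset.range (c+1), (-1:ℤ)^p * (m.choose (c-p))
        = ∑ j ∈ Finset.range (c+1), (-1:ℤ)^c * ((-1:ℤ)^j * (m.choose j)) := by
      rw [← Finset.sum_range_reflect (fun j => (-1:ℤ)^c * ((-1:ℤ)^j * (m.choose j))) (c+1)]
      refine Finset.sum_congr rfl ?_
      intro p hp
      simp only [Finset.mem_range] at hp
      have h1 : c+1-1-p = c - p := by omega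
      rw [h1, neg_one_pow_sub c p (by omega)]
      have h2 : (-1:ℤ)^c * (-1)^c = 1 := by rw [← pow_add]; exact Even.neg_one_pow ⟨c, rfl⟩
      calc (-1:ℤ)^p * (m.choose (c-p))
          = ((-1:ℤ)^c * (-1)^c) * ((-1)^p * (m.choose (c-p))) := by rw [h2, one_mul]
        _ = (-1:ℤ)^c * ((-1)^c * (-1)^p * ↑(m.choose (c - p))) := by ring
    rw [key, ← Finset.mul_sum]
    have hsum : ∑ j ∈ Finset.range (c+1), (-1:ℤ)^j * (m.choose j) = (-1)^c * ((m-1).choose c) :=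
      alt_partial m hm c
    rw [hsum, show m - 0 - 1 = m - 1 by omega, ← mul_assoc]
    rw [show (-1:ℤ)^c * (-1)^c = 1 from by rw [← pow_add]; exact Even.neg_one_pow ⟨c, rfl⟩, one_mul]
  | succ a iha =>
    intro c
    induction c with
    | zero => intro m hm; simp
    | succ c ihc =>
      intro m hm
      have hsplit : ∀ p ∈ Finset.range (c+2), (-1:ℤ)^p * ((a+1+p).choose p) * (m.choose (c+1-p))
          = (-1:ℤ)^p * ((a+p).choose p) * (m.choose (c+1-p))
            + (-1:ℤ)^p * (if p = 0 then 0 else ((a+p).choose (p-1) : ℤ)) * (m.choose (c+1-p)) := by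
        intro p _
        rw [choose_split]; ring
      rw [Finset.sum_congr rfl hsplit, Finset.sum_add_distrib]
      have h1 := iha (c+1) m (by omega)
      rw [h1]
      have h2 : ∑ p ∈ Finset.range (c+2), (-1:ℤ)^p * (if p = 0 then 0 else ((a+p).choose (p-1) : ℤ)) * (m.choose (c+1-p))
          = - ∑ p ∈ Finset.range (c+1), (-1:ℤ)^p * ((a+1+p).choose p) * (m.choose (c-p)) := by
        rw [Finset.sum_range_succ']
        simp only [if_neg (Nat.succ_ne_zero _), Nat.add_sub_cancel, if_pos rfl]
        have h3 : ∀ p ∈ Finset.range (c+1), (-1:ℤ)^(p+1) * ((a+(p+1)).choose p) * (m.choose (c+1-(p+1)))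
            = -((-1:ℤ)^p * ((a+1+p).choose p) * (m.choose (c-p))) := by
          intro p _
          rw [show a+(p+1) = a+1+p by omega, show c+1-(p+1) = c - p by omega, pow_succ]
          ring
        rw [Finset.sum_congr rfl h3]
        simp [Finset.sum_neg_distrib]
      rw [h2, ihc m hm]
      have hp : ((m - (a+1) - 1).choose (c+1) : ℤ) = ((m-a-1).choose (c+1) : ℤ) - ((m-(a+1)-1).choose c : ℤ) := by
        have hm2 : m - a - 1 = (m - (a+1) - 1) + 1 := by omega
        rw [hm2, Nat.choose_succ_succ]
        push_cast; ring
      rw [hp]; ring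

private lemma identD' (a b : ℕ) :
    ∑ p ∈ Finset.range (b+2), (-1:ℤ)^p * ((a+p).choose p) * ((a+b+2).choose (a+p+1)) = 1 := by
  have key : ∀ p ∈ Finset.range (b+2), (-1:ℤ)^p * ((a+p).choose p) * ((a+b+2).choose (a+p+1))
      = (-1:ℤ)^p * ((a+p).choose p) * ((a+b+2).choose (b+1-p)) := by
    intro p hp
    simp only [Finset.mem_range] at hp
    congr 2
    rw [← Nat.choose_symm (by omega : a+p+1 ≤ a+b+2)]
    congr 1
    omega
  rw [Finset.sum_congr rfl key]
  have := identF a (b+1) (a+b+2) (by omega)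
  rw [this, show a+b+2-a-1 = b+1 by omega, Nat.choose_self, Nat.cast_one]

private lemma choose_split' (u s : ℕ) :
    ((u+1).choose s : ℤ) = (u.choose s : ℤ) + (if s = 0 then 0 else (u.choose (s-1) : ℤ)) := by
  cases s with
  | zero => simp
  | succ q =>
    rw [Nat.choose_succ_succ u q]
    simp only [Nat.succ_ne_zero, if_false, Nat.add_sub_cancel]
    push_cast; ring

private lemma identB : ∀ u n j : ℕ,
    ∑ s ∈ Finset.range (u+1), (-1:ℤ)^(u-s) * (u.choose s) * ((n+s).choose j)
      = if u ≤ j then ((n.choose (j-u)):ℤ) else 0 := by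
  intro u
  induction u with
  | zero => intro n j; simp
  | succ u ih =>
    intro n j
    have hsplit : ∀ s ∈ Finset.range (u+2), (-1:ℤ)^(u+1-s) * ((u+1).choose s) * ((n+s).choose j)
        = (-1:ℤ)^(u+1-s) * (u.choose s) * ((n+s).choose j)
          + (-1:ℤ)^(u+1-s) * (if s = 0 then 0 else ((u.choose (s-1)) : ℤ)) * ((n+s).choose j) := by
      intro s _
      rw [choose_split']; ring
    rw [show u+1+1 = u+2 from rfl, Finset.sum_congr rfl hsplit, Finset.sum_add_distrib]
    have part1 : ∑ s ∈ Finset.range (u+2), (-1:ℤ)^(u+1-s) * (u.choose s) * ((n+s).choose j)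
        = - (if u ≤ j then ((n.choose (j-u)):ℤ) else 0) := by
      rw [Finset.sum_range_succ]
      simp only [Nat.choose_succ_self, Nat.cast_zero, mul_zero, zero_mul, add_zero]
      rw [← ih n j, ← Finset.sum_neg_distrib]
      refine Finset.sum_congr rfl ?_
      intro s hs
      simp only [Finset.mem_range] at hs
      rw [show u+1-s = (u-s)+1 by omega, pow_succ]
      ring
    have part2 : ∑ s ∈ Finset.range (u+2), (-1:ℤ)^(u+1-s) * (if s = 0 then 0 else ((u.choose (s-1)) : ℤ)) * ((n+s).choose j)
        = if u ≤ j then (((n+1).choose (j-u)):ℤ) else 0 := by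
      rw [Finset.sum_range_succ'
        (fun s => (-1:ℤ)^(u+1-s) * (if s = 0 then 0 else ((u.choose (s-1)) : ℤ)) * ((n+s).choose j)) (u+1)]
      simp only [if_neg (Nat.succ_ne_zero _), eq_self_iff_true, if_true, mul_zero, zero_mul, add_zero, Nat.add_sub_cancel]
      refine Eq.trans (Finset.sum_congr rfl fun s hs => ?_) (ih (n+1) j)
      have e1 : u+1-(s+1) = u - s := by omega
      have e2 : n+(s+1) = n+1+s := by omega
      rw [e1, e2]
    rw [part1, part2]
    rcases Nat.lt_or_ge j u with h | h
    · rw [if_neg (by omega), if_neg (by omega), if_neg (by omega)]; ring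
    rcases Nat.eq_or_lt_of_le h with rfl | h2
    · rw [if_pos le_rfl, if_pos le_rfl, if_neg (by omega)]
      simp
    · rw [if_pos (by omega), if_pos (by omega), if_pos (by omega)]
      have e : j - u = (j - (u+1)) + 1 := by omega
      rw [e, Nat.choose_succ_succ n (j-(u+1))]
      push_cast
      ring

private lemma hockey (q r : ℕ) :
    ∑ d ∈ Finset.range (r+1), ((q+d).choose q : ℤ) = ((q+r+1).choose (q+1) : ℤ) := by
  have h := Nat.sum_range_add_choose r q
  have : ∑ d ∈ Finset.range (r+1), ((q+d).choose q) = (r+q+1).choose (q+1) := by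
    rw [← h]
    refine Finset.sum_congr rfl fun d _ => by rw [Nat.add_comm q d]
  rw [show q+r+1 = r+q+1 by omega, ← this]
  push_cast
  rfl
section Helpers

variable {M : Type*} [AddCommGroup M]

private lemma finsum_eq_sum_range_of_le {f : ℕ → M} {N R : ℕ} (h : ∀ n, N ≤ n → f n = 0)
    (hNR : N ≤ R) : ∑ᶠ n, f n = ∑ n ∈ Finset.range R, f n := by
  rw [finsum_eq_finset_sum_of_support_subset f (s := Finset.range R)]
  intro n hn
  simp only [Function.mem_support] at hn
  simp only [Finset.coe_range, Set.mem_Iio]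
  by_contra h2
  exact hn (h n (by omega))

private lemma sum_range_ext {f : ℕ → M} {N R : ℕ} (h : ∀ n, N ≤ n → f n = 0) (hNR : N ≤ R) :
    ∑ n ∈ Finset.range R, f n = ∑ n ∈ Finset.range N, f n :=
  (Finset.sum_subset (Finset.range_subset_range.2 hNR)
    (fun x _ hx => h x (by simpa using hx))).symm

private lemma sum_shift {f : ℕ → M} {p B B' : ℕ} (h0 : ∀ m, m < p → f m = 0)
    (hB : ∀ d, B ≤ d → f (d + p) = 0) (hp : p + B ≤ B') :
    ∑ m ∈ Finset.range B', f m = ∑ d ∈ Finset.range B, f (d + p) := by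
  have h1 : ∑ m ∈ Finset.range B', f m = ∑ m ∈ Finset.range (p+B), f m := by
    refine sum_range_ext (fun m hm => ?_) hp
    have := hB (m - p) (by omega)
    rwa [show m - p + p = m by omega] at this
  rw [h1, Finset.sum_range_add]
  rw [Finset.sum_eq_zero (fun m hm => h0 m (by simpa using hm)), zero_add]
  exact Finset.sum_congr rfl fun d _ => by rw [Nat.add_comm]

private lemma sum_sum_diag {g : ℕ → ℕ → M} {R : ℕ} (h : ∀ s t, R ≤ s + t → g s t = 0) :
    ∑ s ∈ Finset.range R, ∑ t ∈ Finset.range R, g s t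
      = ∑ u ∈ Finset.range R, ∑ s ∈ Finset.range (u+1), g s (u - s) := by
  rw [← Finset.sum_product', Finset.sum_sigma']
  rw [← Finset.sum_filter_of_ne
    (p := fun q : ℕ × ℕ => q.1 + q.2 < R)
    (fun q _ hq => by by_contra hc; exact hq (h q.1 q.2 (by omega)))]
  refine Finset.sum_nbij' (fun q => ⟨q.1 + q.2, q.1⟩) (fun t => (t.2, t.1 - t.2)) ?_ ?_ ?_ ?_ ?_
  · intro a ha
    simp only [Finset.mem_filter, Finset.mem_product, Finset.mem_range] at ha
    simp only [Finset.mem_sigma, Finset.mem_range]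
    omega
  · intro b hb
    simp only [Finset.mem_sigma, Finset.mem_range] at hb
    simp only [Finset.mem_filter, Finset.mem_product, Finset.mem_range]
    omega
  · intro a ha
    simp only [Finset.mem_filter, Finset.mem_product, Finset.mem_range] at ha
    simp only [Nat.add_sub_cancel_left]
  · intro b hb
    simp only [Finset.mem_sigma, Finset.mem_range] at hb
    ext
    · simp; omega
    · simp
  · intro a _
    simp only []
    congr 1
    omega

end Helpers

namespace GradedConformalAlgebra

variable {k M : Type*} [CommRing k] [AddCommGroup M] [Module k M]
  (C : GradedConformalAlgebra k M)

private lemma D_comp_apply (i j : ℕ) (v : M) :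
    C.D i (C.D j v) = (((i+j).choose i : ℤ)) • C.D (i+j) v := by
  have h := congrArg (fun f => f v) (C.D_comp i j)
  simpa using h

private lemma nop_zsmul_right (n : ℕ) (c : ℤ) (x u : M) :
    C.nop n x (c • u) = c • C.nop n x u := map_zsmul (C.nop n x) c u

private lemma nop_zsmul_left (n : ℕ) (c : ℤ) (u z : M) :
    C.nop n (c • u) z = c • C.nop n u z := by
  rw [map_zsmul (C.nop n) c u]
  rfl

private lemma nop_sum_left {ι : Type*} (n : ℕ) (s : Finset ι) (f : ι → M) (z : M) :
    C.nop n (∑ i ∈ s, f i) z = ∑ i ∈ s, C.nop n (f i) z := by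
  rw [map_sum (C.nop n) f s]
  exact LinearMap.sum_apply _ _ _

private lemma nop_vanish_hom (A : GradedConformalAlgebra k M) (i : ℕ) (x : M)
    (hxi : x ∈ A.grading i) (y : M) : ∃ N, ∀ n, N ≤ n → A.nop n x y = 0 := by
  have hy : y ∈ ⨆ j, A.grading j := by
    rw [A.isInternal.submodule_iSup_eq_top]; trivial
  refine Submodule.iSup_induction (motive := fun w => ∃ N, ∀ n, N ≤ n → A.nop n x w = 0)
    A.grading hy ?_ ?_ ?_
  · intro j w hwj
    exact ⟨i + j + 1, fun n hn => (A.nop_deg i j n x w hxi hwj).2 (by omega)⟩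
  · exact ⟨0, fun n _ => map_zero (A.nop n x)⟩
  · intro w₁ w₂ hw₁ hw₂
    obtain ⟨N₁, h₁⟩ := hw₁
    obtain ⟨N₂, h₂⟩ := hw₂
    exact ⟨N₁ + N₂, fun n hn => by
      rw [map_add, h₁ n (by omega), h₂ n (by omega), add_zero]⟩

private lemma nop_vanish (A : GradedConformalAlgebra k M) (x y : M) :
    ∃ N, ∀ n, N ≤ n → A.nop n x y = 0 := by
  have hx : x ∈ ⨆ i, A.grading i := by
    rw [A.isInternal.submodule_iSup_eq_top]; trivial
  refine Submodule.iSup_induction (motive := fun w => ∃ N, ∀ n, N ≤ n → A.nop n w y = 0)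
    A.grading hx ?_ ?_ ?_
  · intro i w hwi
    exact nop_vanish_hom A i w hwi y
  · exact ⟨0, fun n _ => by rw [map_zero (A.nop n)]; rfl⟩
  · intro w₁ w₂ hw₁ hw₂
    obtain ⟨N₁, h₁⟩ := hw₁
    obtain ⟨N₂, h₂⟩ := hw₂
    refine ⟨N₁ + N₂, fun n hn => ?_⟩
    rw [map_add (A.nop n)]
    show A.nop n w₁ y + A.nop n w₂ y = 0
    rw [h₁ n (by omega), h₂ n (by omega), add_zero]

end GradedConformalAlgebra

namespace GradedConformalAlgebra

variable {k M : Type*} [CommRing k] [AddCommGroup M] [Module k M]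

private lemma scalar_L1 (n s j t : ℕ) (h : j ≤ n + s) (c1 c2 : ℤ) :
    (-1:ℤ)^(n+1) * (-1)^s * ((-1)^j * c1) * (-1)^(n+s-j+1) * ((-1)^t * c2)
      = (-1)^t * c1 * c2 := by
  have e : (-1:ℤ)^(n+s-j+1) = (-1)^(n+s+1) * (-1)^j := by
    rw [show n+s-j+1 = (n+s+1)-j by omega]
    exact neg_one_pow_sub (n+s+1) j (by omega)
  rw [e]
  have h1 : (-1:ℤ)^(n+1) * (-1)^s * (-1)^(n+s+1) = 1 := by
    rw [← pow_add, ← pow_add, show n+1+s+(n+s+1) = 2*(n+s+1) by omega, pow_mul]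
    norm_num
  have h2 : (-1:ℤ)^j * (-1)^j = 1 := by
    rw [← pow_add]; exact Even.neg_one_pow ⟨j, rfl⟩
  calc (-1:ℤ)^(n+1) * (-1)^s * ((-1)^j * c1) * ((-1)^(n+s+1) * (-1)^j) * ((-1)^t * c2)
      = ((-1)^(n+1) * (-1)^s * (-1)^(n+s+1)) * ((-1)^j * (-1)^j) * ((-1)^t * c1 * c2) := by ring
    _ = (-1)^t * c1 * c2 := by rw [h1, h2]; ring

private lemma nop_D (A : GradedConformalAlgebra k M) (n j : ℕ) (x y : M) :
    A.nop n x (A.D j y) = ∑ i ∈ Finset.range (j+1),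
      ((n.choose i : ℤ)) • A.D (j-i) (A.nop (n-i) x y) := by
  obtain ⟨Nyx, hNyx⟩ := nop_vanish A y x
  obtain ⟨Nxy, hNxy⟩ := nop_vanish A x y
  set R := n + j + Nyx + Nxy + 1 with hR
  have hqs := A.quasi_symm n x (A.D j y)
  have hconv : (∑ᶠ s : ℕ, ((-1:ℤ)^s) • A.D s (A.nop (n+s) (A.D j y) x))
      = ∑ s ∈ Finset.range R, ((-1:ℤ)^s) • A.D s (A.nop (n+s) (A.D j y) x) := by
    refine finsum_eq_sum_range_of_le (N := R) (fun s hs => ?_) le_rfl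
    rw [A.D_nop j (n+s) y x, hNyx (n+s-j) (by omega), smul_zero, map_zero, smul_zero]
  rw [hqs, hconv, Finset.smul_sum]
  have step2 : ∀ s ∈ Finset.range R,
      ((-1:ℤ)^(n+1)) • (((-1:ℤ)^s) • A.D s (A.nop (n+s) (A.D j y) x))
        = ∑ t ∈ Finset.range R,
            ((-1:ℤ)^t * (((n+s).choose j : ℤ)) * (((s+t).choose s : ℤ)))
              • A.D (s+t) (A.nop (n+(s+t)-j) x y) := by
    intro s _
    rw [A.D_nop j (n+s) y x]
    by_cases hc : j ≤ n + s
    · rw [A.quasi_symm (n+s-j) y x]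
      have hconv2 : (∑ᶠ t : ℕ, ((-1:ℤ)^t) • A.D t (A.nop ((n+s-j)+t) x y))
          = ∑ t ∈ Finset.range R, ((-1:ℤ)^t) • A.D t (A.nop ((n+s-j)+t) x y) :=
        finsum_eq_sum_range_of_le (N := R) (fun t ht => by
          rw [hNxy ((n+s-j)+t) (by omega), map_zero, smul_zero]) le_rfl
      rw [hconv2, map_zsmul, map_zsmul, map_sum]
      rw [Finset.smul_sum, Finset.smul_sum, Finset.smul_sum, Finset.smul_sum]
      refine Finset.sum_congr rfl fun t _ => ?_
      rw [map_zsmul, D_comp_apply]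
      rw [show n+s-j+t = n+(s+t)-j from by omega]
      simp only [smul_smul]
      congr 1
      linear_combination scalar_L1 n s j t hc ((n+s).choose j : ℤ) ((s+t).choose s : ℤ)
    · have hc2 : (n+s).choose j = 0 := Nat.choose_eq_zero_of_lt (by omega)
      simp [hc2]
  rw [Finset.sum_congr rfl step2]
  have hvan : ∀ s t, R ≤ s + t →
      ((-1:ℤ)^t * (((n+s).choose j : ℤ)) * (((s+t).choose s : ℤ)))
        • A.D (s+t) (A.nop (n+(s+t)-j) x y) = 0 := by
    intro s t hst
    rw [hNxy (n+(s+t)-j) (by omega), map_zero, smul_zero]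
  rw [sum_sum_diag hvan]
  have step3 : ∀ u ∈ Finset.range R,
      (∑ s ∈ Finset.range (u+1),
        ((-1:ℤ)^(u-s) * (((n+s).choose j : ℤ)) * (((s+(u-s)).choose s : ℤ)))
          • A.D (s+(u-s)) (A.nop (n+(s+(u-s))-j) x y))
      = (if u ≤ j then ((n.choose (j-u)):ℤ) else 0) • A.D u (A.nop (n+u-j) x y) := by
    intro u _
    have hterm : ∀ s ∈ Finset.range (u+1),
        ((-1:ℤ)^(u-s) * (((n+s).choose j : ℤ)) * (((s+(u-s)).choose s : ℤ)))
          • A.D (s+(u-s)) (A.nop (n+(s+(u-s))-j) x y)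
        = ((-1:ℤ)^(u-s) * ((u.choose s : ℤ)) * (((n+s).choose j : ℤ)))
          • A.D u (A.nop (n+u-j) x y) := by
      intro s hs
      simp only [Finset.mem_range] at hs
      rw [show s+(u-s) = u by omega]
      congr 1; ring
    rw [Finset.sum_congr rfl hterm, ← Finset.sum_smul, identB u n j]
  rw [Finset.sum_congr rfl step3]
  rw [sum_range_ext (N := j+1) (fun u hu => by
    rw [if_neg (by omega), zero_smul]) (by omega)]
  rw [← Finset.sum_range_reflect (fun i => ((n.choose i : ℤ)) • A.D (j-i) (A.nop (n-i) x y)) (j+1)]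
  refine Finset.sum_congr rfl fun u hu => ?_
  simp only [Finset.mem_range] at hu
  rw [if_pos (by omega : u ≤ j)]
  rw [show j+1-1-u = j-u by omega, show j-(j-u) = u by omega, show n-(j-u) = n+u-j by omega]

end GradedConformalAlgebra

namespace GradedConformalAlgebra

variable {k M : Type*} [CommRing k] [AddCommGroup M] [Module k M]

private lemma bracket_eq_sum (A : GradedConformalAlgebra k M) {x y : M} {R : ℕ}
    (h : ∀ n, R ≤ n → A.nop n x y = 0) :
    A.bracket x y = ∑ j ∈ Finset.range R, ((-1:ℤ)^j) • A.D (j+1) (A.nop j x y) := by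
  show (∑ᶠ j : ℕ, ((-1:ℤ)^j) • A.D (j+1) (A.nop j x y)) = _
  refine finsum_eq_sum_range_of_le (N := R) (fun n hn => ?_) le_rfl
  rw [h n hn, map_zero, smul_zero]

private lemma bound_pair (A : GradedConformalAlgebra k M) (x y z : M) :
    ∃ P, (∀ n, P ≤ n → A.nop n y z = 0)
      ∧ (∀ m n, P ≤ m → A.nop m x (A.nop n y z) = 0) := by
  obtain ⟨P0, h0⟩ := nop_vanish A y z
  choose g hg using fun n => nop_vanish A x (A.nop n y z)
  refine ⟨P0 + (Finset.range P0).sup g, fun n hn => h0 n (by omega), fun m n hm => ?_⟩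
  by_cases hn : n < P0
  · exact hg n m (le_trans (Finset.le_sup (f := g) (Finset.mem_range.2 hn)) (by omega))
  · rw [h0 n (by omega), map_zero]

private lemma bound_left (A : GradedConformalAlgebra k M) (x y z : M) :
    ∃ P, (∀ q, P ≤ q → A.nop q x y = 0)
      ∧ (∀ r q, P ≤ r → A.nop r (A.nop q x y) z = 0) := by
  obtain ⟨P0, h0⟩ := nop_vanish A x y
  choose g hg using fun q => nop_vanish A (A.nop q x y) z
  refine ⟨P0 + (Finset.range P0).sup g, fun q hq => h0 q (by omega), fun r q hr => ?_⟩
  by_cases hq : q < P0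
  · exact hg q r (le_trans (Finset.le_sup (f := g) (Finset.mem_range.2 hq)) (by omega))
  · rw [h0 q (by omega), map_zero (A.nop r)]
    rfl

private lemma bracket_bracket (A : GradedConformalAlgebra k M) (x y z : M) (P : ℕ)
    (h1 : ∀ n, P ≤ n → A.nop n y z = 0)
    (h2 : ∀ m n, P ≤ m → A.nop m x (A.nop n y z) = 0) :
    A.bracket x (A.bracket y z)
      = ∑ m ∈ Finset.range P, ∑ n ∈ Finset.range P,
          ((-1:ℤ)^(m+n)) • A.D (m+n+2) (A.nop m x (A.nop n y z)) := by
  have hw := bracket_eq_sum A h1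
  have expand_nop : ∀ m' : ℕ, A.nop m' x (A.bracket y z)
      = ∑ n ∈ Finset.range P, ∑ p ∈ Finset.range (n+2),
          ((-1:ℤ)^n * (m'.choose p : ℤ)) • A.D (n+1-p) (A.nop (m'-p) x (A.nop n y z)) := by
    intro m'
    rw [hw, map_sum (A.nop m' x)]
    refine Finset.sum_congr rfl fun n _ => ?_
    rw [map_zsmul, nop_D A m' (n+1) x (A.nop n y z), Finset.smul_sum]
    refine Finset.sum_congr rfl fun p _ => ?_
    rw [smul_smul]
  have hvan : ∀ m', 2*P ≤ m' → A.nop m' x (A.bracket y z) = 0 := by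
    intro m' hm'
    rw [expand_nop m']
    refine Finset.sum_eq_zero fun n hn => Finset.sum_eq_zero fun p hp => ?_
    simp only [Finset.mem_range] at hn hp
    rw [h2 (m'-p) n (by omega), map_zero, smul_zero]
  have main := bracket_eq_sum A (x := x) (y := A.bracket y z) hvan
  rw [main]
  have big1 : ∀ m' ∈ Finset.range (2*P),
      ((-1:ℤ)^m') • A.D (m'+1) (A.nop m' x (A.bracket y z))
        = ∑ n ∈ Finset.range P, ∑ p ∈ Finset.range (n+2),
            ((-1:ℤ)^(m'+n) * (m'.choose p : ℤ) * (((m'+1+(n+1-p)).choose (m'+1)) : ℤ))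
              • A.D (m'+1+(n+1-p)) (A.nop (m'-p) x (A.nop n y z)) := by
    intro m' _
    rw [expand_nop m', map_sum (A.D (m'+1)), Finset.smul_sum]
    refine Finset.sum_congr rfl fun n _ => ?_
    rw [map_sum (A.D (m'+1)), Finset.smul_sum]
    refine Finset.sum_congr rfl fun p _ => ?_
    rw [map_zsmul, D_comp_apply]
    simp only [smul_smul]
    congr 1
    rw [pow_add]
    ring
  rw [Finset.sum_congr rfl big1]
  rw [Finset.sum_comm]
  have swap2 : ∀ n ∈ Finset.range P,
      (∑ m' ∈ Finset.range (2*P), ∑ p ∈ Finset.range (n+2),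
        ((-1:ℤ)^(m'+n) * (m'.choose p : ℤ) * (((m'+1+(n+1-p)).choose (m'+1)) : ℤ))
          • A.D (m'+1+(n+1-p)) (A.nop (m'-p) x (A.nop n y z)))
      = ∑ m ∈ Finset.range P,
          ((-1:ℤ)^(m+n)) • A.D (m+n+2) (A.nop m x (A.nop n y z)) := by
    intro n hn
    simp only [Finset.mem_range] at hn
    rw [Finset.sum_comm]
    have shift : ∀ p ∈ Finset.range (n+2),
        (∑ m' ∈ Finset.range (2*P),
          ((-1:ℤ)^(m'+n) * (m'.choose p : ℤ) * (((m'+1+(n+1-p)).choose (m'+1)) : ℤ))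
            • A.D (m'+1+(n+1-p)) (A.nop (m'-p) x (A.nop n y z)))
        = ∑ m ∈ Finset.range P,
            ((-1:ℤ)^(m+n) * ((-1:ℤ)^p * ((m+p).choose p : ℤ) * (((m+n+2).choose (m+p+1)) : ℤ)))
              • A.D (m+n+2) (A.nop m x (A.nop n y z)) := by
      intro p hp
      simp only [Finset.mem_range] at hp
      rw [sum_shift (p := p) (B := P)
        (fun m' hm' => by
          rw [Nat.choose_eq_zero_of_lt hm']
          simp)
        (fun d hd => by
          rw [show d+p-p = d by omega, h2 d n hd, map_zero, smul_zero])
        (by omega)]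
      refine Finset.sum_congr rfl fun m _ => ?_
      rw [show m+p+1+(n+1-p) = m+n+2 by omega, show m+p-p = m by omega]
      congr 1
      rw [pow_add, pow_add]
      ring
    rw [Finset.sum_congr rfl shift, Finset.sum_comm]
    refine Finset.sum_congr rfl fun m _ => ?_
    have pull : ∑ p ∈ Finset.range (n+2),
        ((-1:ℤ)^(m+n) * ((-1:ℤ)^p * ((m+p).choose p : ℤ) * (((m+n+2).choose (m+p+1)) : ℤ)))
          • A.D (m+n+2) (A.nop m x (A.nop n y z))
        = (∑ p ∈ Finset.range (n+2),
            (-1:ℤ)^(m+n) * ((-1:ℤ)^p * ((m+p).choose p : ℤ) * (((m+n+2).choose (m+p+1)) : ℤ)))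
          • A.D (m+n+2) (A.nop m x (A.nop n y z)) := (Finset.sum_smul).symm
    rw [pull, ← Finset.mul_sum]
    have hd : ∑ p ∈ Finset.range (n+2),
        (-1:ℤ)^p * ((m+p).choose p : ℤ) * (((m+n+2).choose (m+p+1)) : ℤ) = 1 := identD' m n
    rw [show (∑ p ∈ Finset.range (n+2),
        ((-1:ℤ)^p * ((m+p).choose p : ℤ) * (((m+n+2).choose (m+p+1)) : ℤ)))
      = ∑ p ∈ Finset.range (n+2),
        (-1:ℤ)^p * ((m+p).choose p : ℤ) * (((m+n+2).choose (m+p+1)) : ℤ) from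
      Finset.sum_congr rfl fun p _ => by ring, hd, mul_one]
  rw [Finset.sum_congr rfl swap2, Finset.sum_comm]

end GradedConformalAlgebra

namespace GradedConformalAlgebra

variable {k M : Type*} [CommRing k] [AddCommGroup M] [Module k M]

private lemma bracket_bracket_left (A : GradedConformalAlgebra k M) (x y z : M) (P : ℕ)
    (h1b : ∀ m n, P ≤ m → A.nop m x (A.nop n y z) = 0)
    (h2a : ∀ n, P ≤ n → A.nop n x z = 0)
    (h3a : ∀ q, P ≤ q → A.nop q x y = 0)
    (h3b : ∀ r q, P ≤ r → A.nop r (A.nop q x y) z = 0) :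
    A.bracket (A.bracket x y) z
      = (∑ m ∈ Finset.range P, ∑ n ∈ Finset.range P,
          ((-1:ℤ)^(m+n)) • A.D (m+n+2) (A.nop m x (A.nop n y z)))
        - (∑ m ∈ Finset.range P, ∑ n ∈ Finset.range P,
          ((-1:ℤ)^(m+n)) • A.D (m+n+2) (A.nop n y (A.nop m x z))) := by
  have hwq := bracket_eq_sum A h3a
  have expand_left : ∀ i : ℕ, A.nop i (A.bracket x y) z
      = ∑ q ∈ Finset.range P,
          (-((i.choose (q+1) : ℤ))) • A.nop (i-(q+1)) (A.nop q x y) z := by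
    intro i
    rw [hwq, nop_sum_left A i (Finset.range P) _ z]
    refine Finset.sum_congr rfl fun q _ => ?_
    rw [nop_zsmul_left, A.D_nop (q+1) i (A.nop q x y)]
    rw [smul_smul]
    congr 1
    have h2 : (-1:ℤ)^q * (-1)^q = 1 := by
      rw [← pow_add]; exact Even.neg_one_pow ⟨q, rfl⟩
    rw [pow_succ]
    linear_combination (-((i.choose (q+1) : ℤ))) * h2
  have hvanB : ∀ i, 2*P+1 ≤ i → A.nop i (A.bracket x y) z = 0 := by
    intro i hi
    rw [expand_left i]
    refine Finset.sum_eq_zero fun q hq => ?_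
    simp only [Finset.mem_range] at hq
    rw [h3b (i-(q+1)) q (by omega), smul_zero]
  have mainB := bracket_eq_sum A (x := A.bracket x y) (y := z) hvanB
  rw [mainB]
  have G1 : ∀ i ∈ Finset.range (2*P+1),
      ((-1:ℤ)^i) • A.D (i+1) (A.nop i (A.bracket x y) z)
        = ∑ q ∈ Finset.range P,
            ((-1:ℤ)^(i+1) * (i.choose (q+1) : ℤ)) • A.D (i+1) (A.nop (i-(q+1)) (A.nop q x y) z) := by
    intro i _
    rw [expand_left i, map_sum (A.D (i+1)), Finset.smul_sum]
    refine Finset.sum_congr rfl fun q _ => ?_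
    rw [map_zsmul, smul_smul]
    congr 1
    rw [pow_succ]
    ring
  rw [Finset.sum_congr rfl G1, Finset.sum_comm]
  have G2 : ∀ q ∈ Finset.range P,
      (∑ i ∈ Finset.range (2*P+1),
        ((-1:ℤ)^(i+1) * (i.choose (q+1) : ℤ)) • A.D (i+1) (A.nop (i-(q+1)) (A.nop q x y) z))
      = ∑ r ∈ Finset.range P,
          ((-1:ℤ)^(q+r) * ((q+r+1).choose (q+1) : ℤ)) • A.D (q+r+2) (A.nop r (A.nop q x y) z) := by
    intro q hq
    simp only [Finset.mem_range] at hq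
    rw [sum_shift (p := q+1) (B := P)
      (fun i hi => by rw [Nat.choose_eq_zero_of_lt hi]; simp)
      (fun r hr => by
        rw [show r+(q+1)-(q+1) = r by omega, h3b r q hr, map_zero, smul_zero])
      (by omega)]
    refine Finset.sum_congr rfl fun r _ => ?_
    rw [show r+(q+1)-(q+1) = r by omega, show r+(q+1)+1 = q+r+2 by omega,
      show r+(q+1) = q+r+1 by omega]
    congr 1
    rw [show q+r+2 = (q+r)+2 by omega, pow_add]
    norm_num
  rw [Finset.sum_congr rfl G2]
  have G3 : ∀ q ∈ Finset.range P,
      (∑ r ∈ Finset.range P,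
        ((-1:ℤ)^(q+r) * ((q+r+1).choose (q+1) : ℤ)) • A.D (q+r+2) (A.nop r (A.nop q x y) z))
      = ∑ d ∈ Finset.range P, ∑ n ∈ Finset.range P,
          ((-1:ℤ)^(q+(d+n)) * ((q+d).choose q : ℤ))
            • A.D (q+(d+n)+2) (A.nop (d+n) (A.nop q x y) z) := by
    intro q hq
    have hg : ∀ d n, P ≤ d + n →
        ((-1:ℤ)^(q+(d+n)) * ((q+d).choose q : ℤ))
          • A.D (q+(d+n)+2) (A.nop (d+n) (A.nop q x y) z) = 0 := by
      intro d n hdn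
      rw [h3b (d+n) q hdn, map_zero, smul_zero]
    rw [sum_sum_diag hg]
    refine Finset.sum_congr rfl fun r _ => ?_
    have hterm : ∀ d ∈ Finset.range (r+1),
        ((-1:ℤ)^(q+(d+(r-d))) * ((q+d).choose q : ℤ))
          • A.D (q+(d+(r-d))+2) (A.nop (d+(r-d)) (A.nop q x y) z)
        = ((q+d).choose q : ℤ) • (((-1:ℤ)^(q+r)) • A.D (q+r+2) (A.nop r (A.nop q x y) z)) := by
      intro d hd
      simp only [Finset.mem_range] at hd
      rw [show d+(r-d) = r by omega, smul_smul]
      congr 1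
      ring
    rw [Finset.sum_congr rfl hterm, ← Finset.sum_smul, hockey q r, smul_smul]
    congr 1
    ring
  rw [Finset.sum_congr rfl G3]
  have G4 : ∀ q ∈ Finset.range P,
      (∑ d ∈ Finset.range P, ∑ n ∈ Finset.range P,
          ((-1:ℤ)^(q+(d+n)) * ((q+d).choose q : ℤ))
            • A.D (q+(d+n)+2) (A.nop (d+n) (A.nop q x y) z))
      = ∑ n ∈ Finset.range P, ∑ m ∈ Finset.range (2*P),
          ((-1:ℤ)^(m+n) * (m.choose q : ℤ))
            • A.D (m+n+2) (A.nop (m+n-q) (A.nop q x y) z) := by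
    intro q hq
    simp only [Finset.mem_range] at hq
    rw [Finset.sum_comm]
    refine Finset.sum_congr rfl fun n _ => ?_
    have hterm : ∀ d ∈ Finset.range P,
        ((-1:ℤ)^(q+(d+n)) * ((q+d).choose q : ℤ))
          • A.D (q+(d+n)+2) (A.nop (d+n) (A.nop q x y) z)
        = ((-1:ℤ)^((d+q)+n) * ((d+q).choose q : ℤ))
            • A.D ((d+q)+n+2) (A.nop ((d+q)+n-q) (A.nop q x y) z) := by
      intro d _
      rw [show (d+q)+n-q = d+n by omega, show (d+q)+n+2 = q+(d+n)+2 by omega,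
        show (d+q)+n = q+(d+n) by omega, show d+q = q+d by omega]
    rw [Finset.sum_congr rfl hterm]
    refine (sum_shift
      (f := fun m => ((-1:ℤ)^(m+n) * (m.choose q : ℤ))
        • A.D (m+n+2) (A.nop (m+n-q) (A.nop q x y) z))
      (p := q) (B := P) (B' := 2*P)
      (fun m hm => by rw [Nat.choose_eq_zero_of_lt hm]; simp)
      (fun d hd => by
        rw [show d+q+n-q = d+n by omega, h3b (d+n) q (by omega), map_zero, smul_zero])
      (by omega)).symm
  rw [Finset.sum_congr rfl G4, Finset.sum_comm]
  have G5 : ∀ n ∈ Finset.range P,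
      (∑ q ∈ Finset.range P, ∑ m ∈ Finset.range (2*P),
          ((-1:ℤ)^(m+n) * (m.choose q : ℤ))
            • A.D (m+n+2) (A.nop (m+n-q) (A.nop q x y) z))
      = ∑ m ∈ Finset.range (2*P),
          ((-1:ℤ)^(m+n)) • A.D (m+n+2)
            (A.nop m x (A.nop n y z) - A.nop n y (A.nop m x z)) := by
    intro n _
    rw [Finset.sum_comm]
    refine Finset.sum_congr rfl fun m hm => ?_
    simp only [Finset.mem_range] at hm
    have E1 : ∑ q ∈ Finset.range (P+(m+1)),
        ((-1:ℤ)^(m+n) * (m.choose q : ℤ))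
          • A.D (m+n+2) (A.nop (m+n-q) (A.nop q x y) z)
        = ∑ q ∈ Finset.range P,
        ((-1:ℤ)^(m+n) * (m.choose q : ℤ))
          • A.D (m+n+2) (A.nop (m+n-q) (A.nop q x y) z) :=
      sum_range_ext (fun q hqP => by
        rw [h3a q hqP, map_zero (A.nop (m+n-q)), LinearMap.zero_apply, map_zero, smul_zero])
        (by omega)
    have E2 : ∑ q ∈ Finset.range (P+(m+1)),
        ((-1:ℤ)^(m+n) * (m.choose q : ℤ))
          • A.D (m+n+2) (A.nop (m+n-q) (A.nop q x y) z)
        = ∑ q ∈ Finset.range (m+1),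
        ((-1:ℤ)^(m+n) * (m.choose q : ℤ))
          • A.D (m+n+2) (A.nop (m+n-q) (A.nop q x y) z) :=
      sum_range_ext (fun q hqm => by
        rw [Nat.choose_eq_zero_of_lt (by omega)]; simp) (by omega)
    rw [← E1, E2]
    have pull : ∑ q ∈ Finset.range (m+1),
        ((-1:ℤ)^(m+n) * (m.choose q : ℤ))
          • A.D (m+n+2) (A.nop (m+n-q) (A.nop q x y) z)
        = ((-1:ℤ)^(m+n)) • A.D (m+n+2)
            (∑ q ∈ Finset.range (m+1), ((m.choose q : ℤ)) • A.nop (m+n-q) (A.nop q x y) z) := by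
      rw [map_sum (A.D (m+n+2)), Finset.smul_sum]
      exact Finset.sum_congr rfl fun q _ => by rw [map_zsmul, smul_smul]
    rw [pull]
    congr 2
    have h := A.comm_formula m n x y z
    rw [eq_comm, sub_eq_iff_eq_add', ← h]
  rw [Finset.sum_congr rfl G5, Finset.sum_comm]
  have split : ∑ m ∈ Finset.range (2*P), ∑ n ∈ Finset.range P,
      ((-1:ℤ)^(m+n)) • A.D (m+n+2)
        (A.nop m x (A.nop n y z) - A.nop n y (A.nop m x z))
      = (∑ m ∈ Finset.range (2*P), ∑ n ∈ Finset.range P,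
          ((-1:ℤ)^(m+n)) • A.D (m+n+2) (A.nop m x (A.nop n y z)))
        - (∑ m ∈ Finset.range (2*P), ∑ n ∈ Finset.range P,
          ((-1:ℤ)^(m+n)) • A.D (m+n+2) (A.nop n y (A.nop m x z))) := by
    rw [← Finset.sum_sub_distrib]
    refine Finset.sum_congr rfl fun m _ => ?_
    rw [← Finset.sum_sub_distrib]
    refine Finset.sum_congr rfl fun n' _ => ?_
    rw [map_sub, smul_sub]
  rw [split]
  congr 1
  · exact sum_range_ext (fun m hm => Finset.sum_eq_zero fun n _ => by
      rw [h1b m n hm, map_zero, smul_zero]) (by omega)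
  · exact sum_range_ext (fun m hm => Finset.sum_eq_zero fun n _ => by
      rw [h2a m hm, map_zero (A.nop n y), map_zero, smul_zero]) (by omega)

end GradedConformalAlgebra

/-- Theorem 8.22: the bracket (8.21.1) satisfies the Jacobi identity
`[x,[y,z]] = [[x,y],z] + [y,[x,z]]`, so `(C, [,])` is a Lie algebra over `k`. -/
theorem bracket_jacobi {k M : Type*} [CommRing k] [AddCommGroup M] [Module k M]
    (C : GradedConformalAlgebra k M) (x y z : M) :
    C.bracket x (C.bracket y z)
      = C.bracket (C.bracket x y) z + C.bracket y (C.bracket x z) := by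
  obtain ⟨Pa, h1a, h1b⟩ := GradedConformalAlgebra.bound_pair C x y z
  obtain ⟨Pb, h2a, h2b⟩ := GradedConformalAlgebra.bound_pair C y x z
  obtain ⟨Pc, h3a, h3b⟩ := GradedConformalAlgebra.bound_left C x y z
  obtain ⟨Pd, h4⟩ := GradedConformalAlgebra.nop_vanish C x z
  set P := Pa + Pb + Pc + Pd with hP
  have HX := GradedConformalAlgebra.bracket_bracket C x y z P
    (fun n hn => h1a n (by omega)) (fun m n hm => h1b m n (by omega))
  have HY := GradedConformalAlgebra.bracket_bracket C y x z P
    (fun n hn => h2a n (by omega)) (fun m n hm => h2b m n (by omega))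
  have HZ := GradedConformalAlgebra.bracket_bracket_left C x y z P
    (fun m n hm => h1b m n (by omega)) (fun n hn => h4 n (by omega))
    (fun q hq => h3a q (by omega)) (fun r q hr => h3b r q (by omega))
  rw [HX, HY, HZ]
  have hswap : ∑ m ∈ Finset.range P, ∑ n ∈ Finset.range P,
      ((-1:ℤ)^(m+n)) • C.D (m+n+2) (C.nop n y (C.nop m x z))
      = ∑ m ∈ Finset.range P, ∑ n ∈ Finset.range P,
      ((-1:ℤ)^(m+n)) • C.D (m+n+2) (C.nop m y (C.nop n x z)) := by
    rw [Finset.sum_comm]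
    refine Finset.sum_congr rfl fun n _ => Finset.sum_congr rfl fun m _ => ?_
    rw [Nat.add_comm m n]
  rw [hswap]
  abel
end
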